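/- arXiv:math/0702377 — 2 statements merged into one kernel-verified Lean document; each statement's English description precedes it below -/
import Mathlib

section
/- Let F be a holomorphic self-mapping of the open unit disk Δ belonging to the class C_A^3(1), with angular boundary values F(1) = 1, F'(1) = 1, F''(1) = 0 and F'''(1) = 0. Then F is the identity mapping, i.e. F(z) = z for all z ∈ Δ. -/
open Complex Filter Set Metric ComplexConjugate

noncomputable section

/-- The open unit disk in ℂ. -/
def unitDisk : Set ℂ := {z : ℂ | ‖z‖ < 1}

/-- Stolz angle (nontangential approach region) with vertex `ζ` and aperture `k`. -/
def stolzAngle (ζ : ℂ) (k : ℝ) : Set ℂ :=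
  {z : ℂ | z ∈ unitDisk ∧ ‖z - ζ‖ < k * (1 - ‖z‖)}

/-- Angular (nontangential) limit of `g` at the boundary point `ζ` equals `L`:
the limit of `g` within every Stolz angle with vertex `ζ`. -/
def AngularLimAt (g : ℂ → ℂ) (ζ L : ℂ) : Prop :=
  ∀ k : ℝ, 1 < k → Filter.Tendsto g (nhdsWithin ζ (stolzAngle ζ k)) (nhds L)

/-- `g` belongs to `C_A^3(1)` with angular boundary values `a0 = g(1)`, `a1 = g'(1)`,
`a2 = g''(1)`, `a3 = g'''(1)`: the remainder of the third order Taylor expansion at `1`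
is `o((z-1)^3)` angularly. -/
def CA3At1 (g : ℂ → ℂ) (a0 a1 a2 a3 : ℂ) : Prop :=
  AngularLimAt (fun z =>
    (g z - (a0 + a1 * (z - 1) + a2 / 2 * (z - 1) ^ 2 + a3 / 6 * (z - 1) ^ 3)) / (z - 1) ^ 3) 1 0

/-- Holomorphic self-mapping of the unit disk. -/
def HolSelfMap (F : ℂ → ℂ) : Prop :=
  DifferentiableOn ℂ F unitDisk ∧ Set.MapsTo F unitDisk unitDisk

/-- `F` is a linear fractional transformation on the unit disk. -/
def IsLFTOn (F : ℂ → ℂ) : Prop :=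
  ∃ a b c d : ℂ, a * d - b * c ≠ 0 ∧ ∀ z ∈ unitDisk, F z = (a * z + b) / (c * z + d)

/-- `F` is a (holomorphic) automorphism of the unit disk. -/
def IsAutomorphismOfDisk (F : ℂ → ℂ) : Prop :=
  HolSelfMap F ∧ ∃ G : ℂ → ℂ, HolSelfMap G ∧
    (∀ z ∈ unitDisk, G (F z) = z) ∧ (∀ z ∈ unitDisk, F (G z) = z)

/-- The horocycle `D(1,k)` internally tangent to the unit circle at 1. -/
def horocycle (k : ℝ) : Set ℂ :=
  {z : ℂ | z ∈ unitDisk ∧ ‖1 - z‖ ^ 2 / (1 - ‖z‖ ^ 2) < k}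

/-- `τ` is the Denjoy–Wolff point of `F`: the iterates converge pointwise to `τ`. -/
def IsDenjoyWolffPt (F : ℂ → ℂ) (τ : ℂ) : Prop :=
  ∀ z ∈ unitDisk, Filter.Tendsto (fun n : ℕ => F^[n] z) Filter.atTop (nhds τ)

/-- A one-parameter continuous semigroup of holomorphic self-mappings of the disk. -/
def IsSemigroupOnDisk (S : ℝ → ℂ → ℂ) : Prop :=
  (∀ t : ℝ, 0 ≤ t → HolSelfMap (S t)) ∧
  (∀ t : ℝ, 0 ≤ t → ∀ s : ℝ, 0 ≤ s → ∀ z ∈ unitDisk, S (t + s) z = S t (S s z)) ∧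
  (∀ z ∈ unitDisk, Filter.Tendsto (fun t : ℝ => S t z) (nhdsWithin 0 (Set.Ioi 0)) (nhds z))

/-- `f` is the infinitesimal generator of the semigroup `S`. -/
def Generates (f : ℂ → ℂ) (S : ℝ → ℂ → ℂ) : Prop :=
  IsSemigroupOnDisk S ∧
  ∀ z ∈ unitDisk,
    Filter.Tendsto (fun t : ℝ => (z - S t z) / (t : ℂ)) (nhdsWithin 0 (Set.Ioi 0)) (nhds (f z))

/-- `f` belongs to the class `G(Δ)` of infinitesimal generators on the disk. -/
def IsGenerator (f : ℂ → ℂ) : Prop :=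
  DifferentiableOn ℂ f unitDisk ∧ ∃ S : ℝ → ℂ → ℂ, Generates f S

/-- `f` generates a one-parameter group of automorphisms of the disk
(equivalently, both `f` and `-f` are generators). -/
def GeneratesGroupOfAutomorphisms (f : ℂ → ℂ) : Prop :=
  IsGenerator f ∧ IsGenerator (fun z => -f z)

/-- Hyperbolic automorphism of the disk: an automorphism with boundary Denjoy–Wolff point `τ`
and angular derivative `0 < F'(τ) < 1`. -/
def IsHyperbolicAut (F : ℂ → ℂ) : Prop :=
  IsAutomorphismOfDisk F ∧ ∃ τ : ℂ, ‖τ‖ = 1 ∧ IsDenjoyWolffPt F τ ∧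
    ∃ α : ℝ, 0 < α ∧ α < 1 ∧ AngularLimAt (fun z => (F z - τ) / (z - τ)) τ (α : ℂ)

/-- Parabolic automorphism of the disk: an automorphism with boundary Denjoy–Wolff point `τ`
and angular derivative `F'(τ) = 1`. -/
def IsParabolicAut (F : ℂ → ℂ) : Prop :=
  IsAutomorphismOfDisk F ∧ ∃ τ : ℂ, ‖τ‖ = 1 ∧ IsDenjoyWolffPt F τ ∧
    AngularLimAt (fun z => (F z - τ) / (z - τ)) τ 1

namespace BKAux

def rhp : Set ℂ := {w : ℂ | 0 < w.re}

lemma mem_rhp_iff {w : ℂ} : w ∈ rhp ↔ 0 < w.re := Iff.rfl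

lemma isOpen_rhp : IsOpen rhp := isOpen_lt continuous_const Complex.continuous_re

lemma preconnected_rhp : IsPreconnected rhp :=
  (convex_halfSpace_re_gt (0:ℝ)).isPreconnected

lemma ofReal_mem_rhp {t : ℝ} (ht : 0 < t) : (t : ℂ) ∈ rhp := by
  simpa [mem_rhp_iff] using ht

lemma one_sub_ne {z : ℂ} (hz : ‖z‖ < 1) : (1 : ℂ) - z ≠ 0 := by
  intro h
  rw [sub_eq_zero] at h
  rw [← h] at hz
  simp at hz

lemma normSq_lt_one {z : ℂ} (hz : ‖z‖ < 1) : normSq z < 1 := by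
  have := Complex.sq_norm z
  nlinarith [norm_nonneg z]

/-- real part of the Cayley transform. -/
lemma re_cayley_pos {z : ℂ} (hz : ‖z‖ < 1) : 0 < ((1 + z) / (1 - z)).re := by
  have h1 : (1 : ℂ) - z ≠ 0 := one_sub_ne hz
  have h2 : 0 < normSq (1 - z) := normSq_pos.2 h1
  have h3 : normSq z < 1 := normSq_lt_one hz
  rw [Complex.div_re]
  have hnum : (1 + z).re * (1 - z).re + (1 + z).im * (1 - z).im = 1 - normSq z := by
    simp [Complex.normSq_apply]; ring
  rw [← add_div, hnum]
  exact div_pos (by linarith) h2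

/-- key algebraic identity. -/
lemma normSq_key (u a : ℂ) :
    normSq (u + conj a) - normSq (u - a) = 4 * a.re * u.re := by
  simp [Complex.normSq_apply]
  ring

lemma abs_lt_abs_of_normSq {x y : ℂ} (h : normSq x < normSq y) :
    ‖x‖ < ‖y‖ := by
  rw [Complex.norm_def, Complex.norm_def]
  exact Real.sqrt_lt_sqrt (normSq_nonneg _) h

lemma psi_den_ne {a u : ℂ} (ha : 0 < a.re) (hu : 0 < u.re) : u + conj a ≠ 0 := by
  intro h
  have := congrArg Complex.re h
  simp [Complex.add_re, Complex.conj_re] at this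
  linarith

lemma psi_abs_lt_one {a u : ℂ} (ha : 0 < a.re) (hu : 0 < u.re) :
    ‖((u - a) / (u + conj a))‖ < 1 := by
  have hne := psi_den_ne ha hu
  rw [norm_div, div_lt_one (norm_pos_iff.mpr hne)]
  apply abs_lt_abs_of_normSq
  nlinarith [normSq_key u a]

lemma psi_sq_ineq {a u : ℂ} (ha : 0 < a.re) (hu : 0 < u.re) {lam : ℝ}
    (h : ‖((u - a) / (u + conj a))‖ ≤ lam) :
    (1 - lam ^ 2) * normSq (u + conj a) ≤ 4 * a.re * u.re := by
  have hne := psi_den_ne ha hu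
  rw [norm_div, div_le_iff₀ (norm_pos_iff.mpr hne)] at h
  have h2 : normSq (u - a) ≤ lam ^ 2 * normSq (u + conj a) := by
    have := mul_self_le_mul_self (norm_nonneg _) h
    rw [← Complex.sq_norm, ← Complex.sq_norm]
    nlinarith [Complex.sq_norm (u - a), Complex.sq_norm (u + conj a)]
  nlinarith [normSq_key u a]


def mC (z : ℂ) : ℂ := (1 + z) / (1 - z)
def mD (w : ℂ) : ℂ := (w - 1) / (w + 1)

lemma add_one_ne {w : ℂ} (hw : w ∈ rhp) : w + 1 ≠ 0 := by
  intro h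
  have := congrArg Complex.re h
  simp [Complex.add_re] at this
  rw [mem_rhp_iff] at hw
  linarith

lemma mC_mem {z : ℂ} (hz : z ∈ unitDisk) : mC z ∈ rhp := re_cayley_pos hz

lemma mD_mem {w : ℂ} (hw : w ∈ rhp) : mD w ∈ unitDisk := by
  have h1 : w + 1 ≠ 0 := add_one_ne hw
  rw [mem_rhp_iff] at hw
  show ‖_‖ < 1
  rw [mD, norm_div, div_lt_one (norm_pos_iff.mpr h1)]
  apply abs_lt_abs_of_normSq
  have h2 : normSq (w + conj 1) - normSq (w - 1) = 4 * (1:ℂ).re * w.re := normSq_key w 1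
  simp only [Complex.one_re, map_one] at h2
  linarith

lemma mC_mD {w : ℂ} (hw : w ∈ rhp) : mC (mD w) = w := by
  have h1 : w + 1 ≠ 0 := add_one_ne hw
  rw [mC, mD]
  have e1 : 1 + (w - 1) / (w + 1) = 2 * w / (w + 1) := by field_simp; ring
  have e2 : 1 - (w - 1) / (w + 1) = 2 / (w + 1) := by field_simp <;> ring
  rw [e1, e2, div_div_div_cancel_right₀ h1]
  field_simp

lemma mD_mC {z : ℂ} (hz : z ∈ unitDisk) : mD (mC z) = z := by
  have h1 : (1:ℂ) - z ≠ 0 := one_sub_ne hz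
  rw [mC, mD]
  have e1 : (1 + z) / (1 - z) - 1 = 2 * z / (1 - z) := by field_simp; ring
  have e2 : (1 + z) / (1 - z) + 1 = 2 / (1 - z) := by field_simp <;> ring
  rw [e1, e2, div_div_div_cancel_right₀ h1]
  field_simp

lemma mC_inj {a b : ℂ} (ha : a ∈ unitDisk) (hb : b ∈ unitDisk) (h : mC a = mC b) : a = b := by
  have h1 : (1:ℂ) - a ≠ 0 := one_sub_ne ha
  have h2 : (1:ℂ) - b ≠ 0 := one_sub_ne hb
  rw [mC, mC, div_eq_div_iff h1 h2] at h
  have : 2 * a = 2 * b := by ring_nf at h ⊢; linear_combination h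
  field_simp at this
  exact this

/-- Schwarz–Pick inequality for holomorphic self-maps of the right half-plane. -/
lemma schwarzPick {G : ℂ → ℂ} (hd : DifferentiableOn ℂ G rhp) (hm : Set.MapsTo G rhp rhp)
    {w : ℂ} (hw : w ∈ rhp) {t : ℝ} (ht : 0 < t) :
    ‖((G w - G t) / (G w + conj (G t)))‖ ≤ ‖((w - t) / (w + t))‖ := by
  have htc : ((t:ℂ)) ∈ rhp := ofReal_mem_rhp ht
  set a := G (t:ℂ) with ha_def
  have ha : 0 < a.re := hm htc
  set φ : ℂ → ℂ := fun z => (t : ℂ) * ((1 + z) / (1 - z)) with hφ_def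
  have hφmem : ∀ z ∈ ball (0:ℂ) 1, φ z ∈ rhp := by
    intro z hz
    rw [mem_ball_zero_iff] at hz
    rw [mem_rhp_iff, hφ_def]
    simp only [Complex.re_ofReal_mul]
    exact mul_pos ht (re_cayley_pos hz)
  have hφd : DifferentiableOn ℂ φ (ball (0:ℂ) 1) := by
    apply DifferentiableOn.const_mul
    apply DifferentiableOn.div (differentiableOn_const _ |>.add differentiableOn_id)
      (differentiableOn_const _ |>.sub differentiableOn_id)
    intro z hz
    exact one_sub_ne (mem_ball_zero_iff.1 hz)
  set f : ℂ → ℂ := fun z => (G (φ z) - a) / (G (φ z) + conj a) with hf_def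
  have hGφd : DifferentiableOn ℂ (fun z => G (φ z)) (ball (0:ℂ) 1) :=
    hd.comp hφd hφmem
  have hden : ∀ z ∈ ball (0:ℂ) 1, G (φ z) + conj a ≠ 0 := fun z hz =>
    psi_den_ne ha (hm (hφmem z hz))
  have hfd : DifferentiableOn ℂ f (ball (0:ℂ) 1) :=
    (hGφd.sub (differentiableOn_const _)).div
      (hGφd.add (differentiableOn_const _)) hden
  have hfm : Set.MapsTo f (ball (0:ℂ) 1) (ball (0:ℂ) 1) := by
    intro z hz
    rw [mem_ball_zero_iff]
    exact psi_abs_lt_one ha (hm (hφmem z hz))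
  have hf0 : f 0 = 0 := by
    have : φ 0 = (t : ℂ) := by rw [hφ_def]; simp
    rw [hf_def]
    simp only [this, ← ha_def, sub_self, zero_div]
  have hwt : w + (t:ℂ) ≠ 0 := by
    intro h
    have := congrArg Complex.re h
    rw [mem_rhp_iff] at hw
    simp [Complex.add_re] at this
    linarith
  set z₀ : ℂ := (w - t) / (w + t) with hz₀_def
  have habs : ‖z₀‖ < 1 := by
    rw [hz₀_def, norm_div, div_lt_one (norm_pos_iff.mpr hwt)]
    apply abs_lt_abs_of_normSq
    have h2 := normSq_key w (t:ℂ)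
    rw [Complex.conj_ofReal] at h2
    rw [mem_rhp_iff] at hw
    simp only [Complex.ofReal_re] at h2
    nlinarith
  have htne : (t:ℂ) ≠ 0 := Complex.ofReal_ne_zero.2 ht.ne'
  have hφz₀ : φ z₀ = w := by
    have e1 : 1 + z₀ = 2 * w / (w + ↑t) := by rw [hz₀_def]; field_simp; ring
    have e2 : 1 - z₀ = 2 * ↑t / (w + ↑t) := by rw [hz₀_def]; field_simp; ring
    show (t : ℂ) * ((1 + z₀) / (1 - z₀)) = w
    rw [e1, e2, div_div_div_cancel_right₀ hwt, mul_div_mul_left w (↑t) two_ne_zero,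
      mul_comm, div_mul_cancel₀ w htne]
  have := Complex.norm_le_norm_of_mapsTo_ball hfd (hfm.mono_right ball_subset_closedBall) hf0 habs
  rw [hf_def] at this
  simpa [hφz₀, ← ha_def, ← hz₀_def] using this

lemma inv_add_tendsto (w : ℂ) :
    Tendsto (fun t : ℝ => (w + (t:ℂ))⁻¹) atTop (nhds (0:ℂ)) := by
  have hb : Tendsto (fun t : ℝ => (t - ‖w‖)⁻¹) atTop (nhds 0) := by
    have : Tendsto (fun t : ℝ => t - ‖w‖) atTop atTop :=
      tendsto_atTop_add_const_right atTop _ tendsto_id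
    exact tendsto_inv_atTop_zero.comp this
  refine squeeze_zero_norm' ?_ hb
  · filter_upwards [eventually_gt_atTop (‖w‖ + 1)] with t ht
    have h1 : t - ‖w‖ ≤ ‖(w + t)‖ := by
      have h4 := norm_add_le (w + t) (-w)
      have e : w + (t:ℂ) + -w = ((t:ℂ)) := by ring
      rw [e, norm_neg] at h4
      have h2 : ‖((t : ℂ))‖ = |t| := by rw [Complex.norm_real, Real.norm_eq_abs]
      have h3 : |t| = t := abs_of_pos (by linarith [norm_nonneg w])
      linarith
    have h0 : (0:ℝ) < t - ‖w‖ := by linarith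
    show ‖(w + (t:ℂ))⁻¹‖ ≤ (t - ‖w‖)⁻¹
    rw [norm_inv]
    exact inv_anti₀ h0 h1

lemma tendsto_conj' {f : ℝ → ℂ} {l : ℂ} (h : Tendsto f atTop (nhds l)) :
    Tendsto (fun t => conj (f t)) atTop (nhds (conj l)) :=
  (Complex.continuous_conj.tendsto l).comp h

/-- Julia's inequality in the right half-plane. -/
lemma julia {G : ℂ → ℂ} (hd : DifferentiableOn ℂ G rhp) (hm : Set.MapsTo G rhp rhp)
    (hlim : Tendsto (fun t : ℝ => G (t:ℂ) - (t:ℂ)) atTop (nhds 0))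
    {w : ℂ} (hw : w ∈ rhp) : w.re ≤ (G w).re := by
  have hGw : 0 < (G w).re := hm hw
  have hwre : 0 < w.re := hw
  have hwt : ∀ t : ℝ, 0 < t → w + (t:ℂ) ≠ 0 := by
    intro t ht h
    have := congrArg Complex.re h
    simp [Complex.add_re] at this
    linarith
  -- the key pointwise inequality
  have key : ∀ t : ℝ, 1 ≤ t →
      w.re * (normSq (G w + conj (G (t:ℂ))) / normSq (w + (t:ℂ)))
        ≤ ((G (t:ℂ)).re / t) * (G w).re := by
    intro t ht1
    have ht : (0:ℝ) < t := lt_of_lt_of_le one_pos ht1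
    have htc : ((t:ℂ)) ∈ rhp := ofReal_mem_rhp ht
    have hGt : 0 < (G (t:ℂ)).re := hm htc
    have hSP := schwarzPick hd hm hw ht
    have h2 := psi_sq_ineq hGt hGw hSP
    have hnswt : 0 < normSq (w + (t:ℂ)) := normSq_pos.2 (hwt t ht)
    have hlam : ‖((w - t) / (w + t))‖ ^ 2
        = normSq (w - (t:ℂ)) / normSq (w + (t:ℂ)) := by
      rw [norm_div, div_pow, Complex.sq_norm, Complex.sq_norm]
    rw [hlam] at h2
    have hkey : normSq (w + (t:ℂ)) - normSq (w - (t:ℂ)) = 4 * t * w.re := by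
      have := normSq_key w (t:ℂ)
      rw [Complex.conj_ofReal] at this
      simpa using this
    have h3 : (1 - normSq (w - (t:ℂ)) / normSq (w + (t:ℂ)))
        = 4 * t * w.re / normSq (w + (t:ℂ)) := by
      field_simp
      linarith
    rw [h3, div_mul_eq_mul_div, div_le_iff₀ hnswt] at h2
    rw [← mul_div_assoc, div_mul_eq_mul_div, div_le_div_iff₀ hnswt ht]
    nlinarith [h2]
  set η : ℝ → ℂ := fun t => G (t:ℂ) - (t:ℂ) with hη_def
  have hηlim : Tendsto η atTop (nhds 0) := hlim
  -- limit of the normSq ratio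
  have hq : Tendsto (fun t : ℝ => (G w + conj (G (t:ℂ))) / (w + (t:ℂ))) atTop (nhds 1) := by
    have heq : ∀ᶠ t : ℝ in atTop,
        1 + (G w + conj (η t) - w) * (w + (t:ℂ))⁻¹
          = (G w + conj (G (t:ℂ))) / (w + (t:ℂ)) := by
      filter_upwards [eventually_ge_atTop (1:ℝ)] with t ht
      have hne := hwt t (lt_of_lt_of_le one_pos ht)
      have hconj : conj (G (t:ℂ)) = (t:ℂ) + conj (η t) := by
        rw [hη_def]
        simp only [map_sub, Complex.conj_ofReal]
        ring
      rw [hconj]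
      field_simp
      ring
    apply Tendsto.congr' heq
    have h1 : Tendsto (fun t : ℝ => (G w + conj (η t) - w)) atTop (nhds (G w - w)) := by
      have := (tendsto_const_nhds (x := G w) (f := atTop)).add (tendsto_conj' hηlim)
      simpa using this.sub (tendsto_const_nhds (x := w))
    have h2 := h1.mul (inv_add_tendsto w)
    simpa using (tendsto_const_nhds (x := (1:ℂ)) (f := atTop)).add h2
  have hratio : Tendsto (fun t : ℝ => normSq (G w + conj (G (t:ℂ))) / normSq (w + (t:ℂ)))
      atTop (nhds 1) := by
    have := (Complex.continuous_normSq.tendsto 1).comp hq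
    simp only [Function.comp_def, map_div₀] at this
    simpa using this
  have hre : Tendsto (fun t : ℝ => (G (t:ℂ)).re / t) atTop (nhds 1) := by
    have heq : ∀ᶠ t : ℝ in atTop, 1 + (η t).re * t⁻¹ = (G (t:ℂ)).re / t := by
      filter_upwards [eventually_ge_atTop (1:ℝ)] with t ht
      have htne : t ≠ 0 := by linarith
      have : (G (t:ℂ)).re = t + (η t).re := by
        rw [hη_def]; simp [Complex.sub_re]
      rw [this]
      field_simp
    apply Tendsto.congr' heq
    have h1 : Tendsto (fun t : ℝ => (η t).re) atTop (nhds 0) := by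
      have := (Complex.continuous_re.tendsto 0).comp hηlim
      simpa [Function.comp_def] using this
    have h2 := h1.mul tendsto_inv_atTop_zero
    simpa using (tendsto_const_nhds (x := (1:ℝ)) (f := atTop)).add h2
  have hfinal := le_of_tendsto_of_tendsto
    ((tendsto_const_nhds (x := w.re) (f := atTop)).mul hratio)
    (hre.mul (tendsto_const_nhds (x := (G w).re)))
    (by filter_upwards [eventually_ge_atTop (1:ℝ)] with t ht using key t ht)
  simpa using hfinal

def bkG (F : ℂ → ℂ) : ℂ → ℂ := fun w => mC (F (mD w))

def bkEps (F : ℂ → ℂ) (t : ℝ) : ℂ := (F (mD t) - mD t) / (mD t - 1) ^ 3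

lemma mD_ofReal (t : ℝ) : mD (t:ℂ) = ((((t-1)/(t+1)):ℝ):ℂ) := by
  rw [mD]; push_cast; ring

lemma mD_real_mem {t : ℝ} (ht : 1 < t) :
    0 ≤ (t-1)/(t+1) ∧ (t-1)/(t+1) < 1 := by
  constructor
  · exact div_nonneg (by linarith) (by linarith)
  · rw [div_lt_one (by linarith)]; linarith

lemma mD_tendsto_one : Tendsto (fun t : ℝ => mD (t:ℂ)) atTop (nhds 1) := by
  have heq : ∀ᶠ t : ℝ in atTop, 1 - 2 * ((1:ℂ) + (t:ℂ))⁻¹ = mD (t:ℂ) := by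
    filter_upwards [eventually_ge_atTop (0:ℝ)] with t ht
    have hne : (1:ℂ) + (t:ℂ) ≠ 0 := by
      intro h
      have := congrArg Complex.re h
      simp [Complex.add_re] at this
      linarith
    have hne2 : ((t:ℂ)) + 1 ≠ 0 := by rwa [add_comm] at hne
    rw [mD]
    field_simp [hne, hne2]
    ring
  apply Tendsto.congr' heq
  have h2 := (tendsto_const_nhds (x := (2:ℂ)) (f := atTop (α := ℝ))).mul (inv_add_tendsto 1)
  simpa using (tendsto_const_nhds (x := (1:ℂ)) (f := atTop (α := ℝ))).sub h2

lemma mD_mem_stolz : ∀ᶠ t : ℝ in atTop, mD (t:ℂ) ∈ stolzAngle 1 2 := by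
  filter_upwards [eventually_gt_atTop (1:ℝ)] with t ht
  obtain ⟨h0, h1⟩ := mD_real_mem ht
  set s := (t-1)/(t+1) with hs
  have habs : ‖(mD (t:ℂ))‖ = s := by
    rw [mD_ofReal, Complex.norm_real, Real.norm_eq_abs, _root_.abs_of_nonneg h0]
  have habs2 : ‖(mD (t:ℂ) - 1)‖ = 1 - s := by
    rw [mD_ofReal]
    rw [show ((s:ℝ):ℂ) - 1 = (((s - 1 : ℝ)):ℂ) by push_cast; ring]
    rw [Complex.norm_real, Real.norm_eq_abs, abs_of_nonpos (by linarith)]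
    ring
  constructor
  · show ‖(mD (t:ℂ))‖ < 1
    rw [habs]; exact h1
  · rw [habs2, habs]; linarith

lemma bkG_diff {F : ℂ → ℂ} (hF : HolSelfMap F) :
    DifferentiableOn ℂ (bkG F) rhp ∧ Set.MapsTo (bkG F) rhp rhp := by
  have hmD_diff : DifferentiableOn ℂ mD rhp := by
    apply DifferentiableOn.div (differentiableOn_id.sub (differentiableOn_const _))
      (differentiableOn_id.add (differentiableOn_const _))
    intro w hw
    exact add_one_ne hw
  have hmD_maps : Set.MapsTo mD rhp unitDisk := fun w hw => mD_mem hw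
  have hmC_diff : DifferentiableOn ℂ mC unitDisk := by
    apply DifferentiableOn.div ((differentiableOn_const _).add differentiableOn_id)
      ((differentiableOn_const _).sub differentiableOn_id)
    intro z hz
    exact one_sub_ne hz
  have hmC_maps : Set.MapsTo mC unitDisk rhp := fun z hz => mC_mem hz
  have hFmD : DifferentiableOn ℂ (fun w => F (mD w)) rhp :=
    hF.1.comp hmD_diff (fun w hw => hmD_maps hw)
  constructor
  · exact hmC_diff.comp hFmD (fun w hw => hF.2 (hmD_maps hw))
  · intro w hw
    exact hmC_maps (hF.2 (hmD_maps hw))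

lemma asympt {F : ℂ → ℂ} (hF : HolSelfMap F)
    (hεlim : Tendsto (bkEps F) atTop (nhds 0)) :
    Tendsto (fun t : ℝ => (t:ℂ) * (bkG F (t:ℂ) - (t:ℂ))) atTop (nhds 0) := by
  have hεnorm : Tendsto (fun t => ‖(bkEps F t)‖) atTop (nhds 0) := by
    have := (continuous_norm.tendsto 0).comp hεlim
    simpa [Function.comp_def] using this
  have hbound : Tendsto (fun t => 8 * ‖(bkEps F t)‖) atTop (nhds 0) := by
    simpa using (tendsto_const_nhds (x := (8:ℝ)) (f := atTop (α := ℝ))).mul hεnorm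
  refine squeeze_zero_norm' ?_ hbound
  have hsmall : ∀ᶠ t : ℝ in atTop, ‖(bkEps F t)‖ < 1 :=
    hεnorm.eventually_lt_const (by norm_num : (0:ℝ) < 1)
  filter_upwards [eventually_ge_atTop (3:ℝ), hsmall] with t ht3 hε1
  have ht1 : (1:ℝ) < t := by linarith
  have htpos : (0:ℝ) < t := by linarith
  obtain ⟨h0, h1⟩ := mD_real_mem ht1
  set z : ℂ := mD (t:ℂ) with hz_def
  have hz : z ∈ unitDisk := by
    show ‖z‖ < 1
    rw [hz_def, mD_ofReal, Complex.norm_real, Real.norm_eq_abs, _root_.abs_of_nonneg h0]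
    exact h1
  set u : ℂ := F z with hu_def
  have hu : u ∈ unitDisk := hF.2 hz
  set A := ‖(bkEps F t)‖ with hA_def
  have hApos : 0 ≤ A := norm_nonneg _
  have htp1 : (0:ℝ) < t + 1 := by linarith
  have hsval : (1:ℝ) - (t-1)/(t+1) = 2/(t+1) := by
    field_simp
    ring
  have h1z : (1:ℂ) - z = (((2/(t+1)):ℝ):ℂ) := by
    rw [hz_def, mD_ofReal, ← hsval]
    push_cast
    ring
  have habs1z : ‖(1 - z)‖ = 2/(t+1) := by
    rw [h1z, Complex.norm_real, Real.norm_eq_abs, abs_of_pos (by positivity)]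
  have hzne1 : z - 1 ≠ 0 := by
    intro h
    rw [sub_eq_zero] at h
    rw [h] at hz
    simp [unitDisk] at hz
  have hγ : u - z = bkEps F t * (z - 1)^3 := by
    rw [bkEps, ← hz_def, ← hu_def, div_mul_cancel₀ _ (pow_ne_zero 3 hzne1)]
  have habsγ : ‖(u - z)‖ = A * (2/(t+1))^3 := by
    rw [hγ, norm_mul, ← hA_def, norm_pow, show z - 1 = -(1 - z) by ring,
      norm_neg, habs1z]
  have htri : ‖(1 - z)‖ ≤ ‖(1 - u)‖ + ‖(u - z)‖ := by
    calc ‖(1 - z)‖ = ‖((1 - u) + (u - z))‖ := by ring_nf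
      _ ≤ _ := norm_add_le _ _
  rw [habs1z, habsγ] at htri
  have hcube : A * (2/(t+1))^3 ≤ 1/(t+1) := by
    have h16 : 16 ≤ (t+1)^2 := by nlinarith
    have h8 : (2/(t+1))^3 ≤ 1/(t+1) := by
      rw [div_pow, div_le_div_iff₀ (by positivity) htp1]
      nlinarith [mul_le_mul_of_nonneg_left h16 htp1.le]
    calc A * (2/(t+1))^3 ≤ 1 * (2/(t+1))^3 := by
          apply mul_le_mul_of_nonneg_right (le_of_lt hε1) (by positivity)
      _ ≤ 1/(t+1) := by rw [one_mul]; exact h8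
  have h2eq : (2:ℝ)/(t+1) = 1/(t+1) + 1/(t+1) := by ring
  have hlb : 1/(t+1) ≤ ‖(1 - u)‖ := by linarith
  have h1une : (1:ℂ) - u ≠ 0 := one_sub_ne hu
  have h1zne : (1:ℂ) - z ≠ 0 := one_sub_ne hz
  have hGid : bkG F (t:ℂ) - (t:ℂ) = 2 * (u - z) / ((1 - u) * (1 - z)) := by
    have hmCz : mC (mD (t:ℂ)) = (t:ℂ) := mC_mD (ofReal_mem_rhp htpos)
    rw [bkG, ← hz_def, ← hu_def, ← hmCz, ← hz_def, mC, mC]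
    field_simp
    ring
  have hBpos : (0:ℝ) < ‖(1 - u)‖ := norm_pos_iff.mpr h1une
  show ‖(t:ℂ) * (bkG F (t:ℂ) - (t:ℂ))‖ ≤ 8 * A
  rw [hGid, norm_mul, Complex.norm_real, Real.norm_eq_abs, abs_of_pos htpos,
    norm_div, norm_mul, norm_mul, Complex.norm_two, habsγ, habs1z, ← mul_div_assoc,
    div_le_iff₀ (by positivity)]
  have key : t * (2 * (A * (2/(t+1))^3)) ≤ 8 * A * (1/(t+1) * (2/(t+1))) := by
    have e1 : t * (2 * (A * (2/(t+1))^3)) = 16 * A * t / (t+1)^3 := by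
      field_simp; ring
    have e2 : 8 * A * (1/(t+1) * (2/(t+1))) = 16 * A / (t+1)^2 := by
      field_simp; ring
    rw [e1, e2, div_le_div_iff₀ (by positivity) (by positivity)]
    nlinarith [mul_nonneg hApos htpos.le, mul_nonneg (mul_nonneg hApos htpos.le) htp1.le]
  calc t * (2 * (A * (2/(t+1))^3)) ≤ 8 * A * (1/(t+1) * (2/(t+1))) := key
    _ ≤ 8 * A * (‖(1 - u)‖ * (2/(t+1))) := by
        apply mul_le_mul_of_nonneg_left ?_ (by positivity)
        apply mul_le_mul_of_nonneg_right hlb (by positivity)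

lemma asympt0 {F : ℂ → ℂ} (hF : HolSelfMap F)
    (hεlim : Tendsto (bkEps F) atTop (nhds 0)) :
    Tendsto (fun t : ℝ => bkG F (t:ℂ) - (t:ℂ)) atTop (nhds 0) := by
  have h1 := asympt hF hεlim
  have hinv : Tendsto (fun t : ℝ => ((t:ℂ))⁻¹) atTop (nhds 0) := by
    have := inv_add_tendsto 0
    simpa using this
  have heq : ∀ᶠ t : ℝ in atTop,
      ((t:ℂ))⁻¹ * ((t:ℂ) * (bkG F (t:ℂ) - (t:ℂ))) = bkG F (t:ℂ) - (t:ℂ) := by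
    filter_upwards [eventually_ge_atTop (1:ℝ)] with t ht
    have htne : (t:ℂ) ≠ 0 := Complex.ofReal_ne_zero.2 (by linarith)
    rw [← mul_assoc, inv_mul_cancel₀ htne, one_mul]
  apply Tendsto.congr' heq
  simpa using hinv.mul h1

lemma abs_int_two_pi (n : ℤ) :
    ‖((n:ℂ) * (2 * (Real.pi:ℂ) * Complex.I))‖ = |(n:ℝ)| * (2 * Real.pi) := by
  rw [norm_mul, norm_mul, norm_mul, Complex.norm_I, Complex.norm_two, Complex.norm_real, Real.norm_eq_abs,
    Complex.norm_intCast, abs_of_pos Real.pi_pos, mul_one]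

/-- The heart of the rigidity argument: a self-map of the half-plane with
`t * (G t - t) → 0` along the positive reals is the identity. -/
lemma H_zero {G : ℂ → ℂ} (hd : DifferentiableOn ℂ G rhp) (hm : Set.MapsTo G rhp rhp)
    (hlim : Tendsto (fun t : ℝ => (t:ℂ) * (G (t:ℂ) - (t:ℂ))) atTop (nhds 0))
    (hlim0 : Tendsto (fun t : ℝ => G (t:ℂ) - (t:ℂ)) atTop (nhds 0)) :
    ∀ w ∈ rhp, G w = w := by
  have hjulia : ∀ w ∈ rhp, w.re ≤ (G w).re := fun w hw => julia hd hm hlim0 hw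
  set H : ℂ → ℂ := fun w => G w - w with hH_def
  have hHd : DifferentiableOn ℂ H rhp := hd.sub differentiableOn_id
  have hHre : ∀ w ∈ rhp, 0 ≤ (H w).re := by
    intro w hw
    have := hjulia w hw
    simp only [hH_def, Complex.sub_re]
    linarith
  suffices hS : ∀ w ∈ rhp, H w = 0 by
    intro w hw
    have := hS w hw
    rw [hH_def] at this
    simpa [sub_eq_zero] using this
  have hlimH : Tendsto (fun t : ℝ => (t:ℂ) * H (t:ℂ)) atTop (nhds 0) := hlim
  have hlimH0 : Tendsto (fun t : ℝ => H (t:ℂ)) atTop (nhds 0) := hlim0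
  by_cases hcase : ∀ w ∈ rhp, 0 < (H w).re
  · -- impossible: 1/H would grow too fast
    exfalso
    have hHne : ∀ w ∈ rhp, H w ≠ 0 := by
      intro w hw h
      have := hcase w hw
      rw [h] at this
      simp at this
    set Q : ℂ → ℂ := fun w => (H w)⁻¹ with hQ_def
    have hQd : DifferentiableOn ℂ Q rhp := hHd.inv hHne
    have hQm : Set.MapsTo Q rhp rhp := by
      intro w hw
      show 0 < ((H w)⁻¹).re
      rw [Complex.inv_re]
      exact div_pos (hcase w hw) (normSq_pos.2 (hHne w hw))
    have h1r : (1:ℂ) ∈ rhp := by simp [mem_rhp_iff]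
    set c := ‖(Q 1)‖ with hc_def
    have hc : 0 < c := norm_pos_iff.mpr (inv_ne_zero (hHne 1 h1r))
    have hgrowth : ∀ t : ℝ, 1 ≤ t → ‖(Q (t:ℂ))‖ ≤ c * t := by
      intro t ht1
      have htpos : (0:ℝ) < t := by linarith
      have htr : ((t:ℂ)) ∈ rhp := ofReal_mem_rhp htpos
      have hSP := schwarzPick hQd hQm h1r htpos
      have hden : Q 1 + conj (Q (t:ℂ)) ≠ 0 := psi_den_ne (hQm htr) (hQm h1r)
      have hlam : ‖(((1:ℂ) - t) / ((1:ℂ) + t))‖ = (t-1)/(t+1) := by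
        rw [show (1:ℂ) - (t:ℂ) = (((1 - t : ℝ)):ℂ) by push_cast; ring,
          show (1:ℂ) + (t:ℂ) = (((1 + t : ℝ)):ℂ) by push_cast; ring,
          norm_div, Complex.norm_real, Real.norm_eq_abs, Complex.norm_real, Real.norm_eq_abs,
          abs_of_nonpos (by linarith), abs_of_pos (by linarith)]
        rw [neg_sub]
        ring_nf
      rw [hlam, norm_div, div_le_iff₀ (norm_pos_iff.mpr hden)] at hSP
      have htri1 : ‖(Q 1 + conj (Q (t:ℂ)))‖
          ≤ c + ‖(Q (t:ℂ))‖ := by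
        calc ‖(Q 1 + conj (Q (t:ℂ)))‖
            ≤ ‖(Q 1)‖ + ‖(conj (Q (t:ℂ)))‖ := norm_add_le _ _
          _ = c + ‖(Q (t:ℂ))‖ := by rw [Complex.norm_conj]
      have htri2 : ‖(Q (t:ℂ))‖ ≤ c + ‖(Q 1 - Q (t:ℂ))‖ := by
        have e : Q (t:ℂ) = Q 1 + (Q (t:ℂ) - Q 1) := by ring
        calc ‖(Q (t:ℂ))‖ = ‖(Q 1 + (Q (t:ℂ) - Q 1))‖ := by rw [← e]
          _ ≤ ‖(Q 1)‖ + ‖(Q (t:ℂ) - Q 1)‖ := norm_add_le _ _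
          _ = c + ‖(Q 1 - Q (t:ℂ))‖ := by
              rw [← neg_sub (Q 1) (Q (t:ℂ)), norm_neg]
      have hfrac : (0:ℝ) ≤ (t-1)/(t+1) := div_nonneg (by linarith) (by linarith)
      have hstep : ‖(Q 1 - Q (t:ℂ))‖ ≤ (t-1)/(t+1) * (c + ‖(Q (t:ℂ))‖) := by
        calc ‖(Q 1 - Q (t:ℂ))‖ ≤ (t-1)/(t+1) * ‖(Q 1 + conj (Q (t:ℂ)))‖ := hSP
          _ ≤ _ := mul_le_mul_of_nonneg_left htri1 hfrac
      set X := ‖(Q (t:ℂ))‖ with hX_def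
      have hXpos : 0 ≤ X := norm_nonneg _
      have hmain : X ≤ c + (t-1)/(t+1) * (c + X) := le_trans htri2 (by linarith)
      have htp1 : (0:ℝ) < t + 1 := by linarith
      have hexpand : X * (t+1) ≤ c * (t+1) + (t-1) * (c + X) := by
        have := mul_le_mul_of_nonneg_right hmain htp1.le
        calc X * (t+1) ≤ (c + (t-1)/(t+1) * (c + X)) * (t+1) := this
          _ = c * (t+1) + (t-1) * (c + X) := by field_simp <;> ring
      nlinarith
    -- now derive the contradiction
    have htH : Tendsto (fun t : ℝ => ‖((t:ℂ) * H (t:ℂ))‖) atTop (nhds 0) := by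
      have h := (continuous_norm.tendsto 0).comp hlimH
      rw [show ‖(0:ℂ)‖ = 0 from norm_zero] at h
      exact h
    have hev : ∀ᶠ t : ℝ in atTop, ‖((t:ℂ) * H (t:ℂ))‖ < c⁻¹ :=
      htH.eventually_lt_const (by positivity)
    obtain ⟨t, ht1, hsm⟩ := ((eventually_ge_atTop (1:ℝ)).and hev).exists
    have htpos : (0:ℝ) < t := by linarith
    have htr : ((t:ℂ)) ∈ rhp := ofReal_mem_rhp htpos
    have hQt : ‖(Q (t:ℂ))‖ ≤ c * t := hgrowth t ht1
    have hQtpos : 0 < ‖(Q (t:ℂ))‖ :=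
      norm_pos_iff.mpr (inv_ne_zero (hHne _ htr))
    have hHt : ‖(H (t:ℂ))‖ = (‖(Q (t:ℂ))‖)⁻¹ := by
      rw [hQ_def, norm_inv, inv_inv]
    have habs : ‖((t:ℂ) * H (t:ℂ))‖ = t * ‖(H (t:ℂ))‖ := by
      rw [norm_mul, Complex.norm_real, Real.norm_eq_abs, abs_of_pos htpos]
    rw [habs, hHt] at hsm
    -- t * (abs Q t)⁻¹ < c⁻¹ but abs Q t ≤ c * t
    set X := ‖(Q (t:ℂ))‖ with hX_def
    have h1 : t * X⁻¹ * X < c⁻¹ * X := mul_lt_mul_of_pos_right hsm hQtpos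
    rw [mul_assoc, inv_mul_cancel₀ (ne_of_gt hQtpos), mul_one] at h1
    have h2 : c⁻¹ * X ≤ c⁻¹ * (c * t) := mul_le_mul_of_nonneg_left hQt (by positivity)
    rw [← mul_assoc, inv_mul_cancel₀ (ne_of_gt hc), one_mul] at h2
    linarith
  · -- the real part of H vanishes somewhere: maximum principle
    push_neg at hcase
    obtain ⟨w₀, hw₀, hw₀le⟩ := hcase
    have hw₀eq : (H w₀).re = 0 := le_antisymm hw₀le (hHre w₀ hw₀)
    set e : ℂ → ℂ := fun w => Complex.exp (-H w) with he_def
    have hed : DifferentiableOn ℂ e rhp := (hHd.neg).cexp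
    have hmax : IsMaxOn (norm ∘ e) rhp w₀ := by
      intro w hw
      show ‖e w‖ ≤ ‖e w₀‖
      rw [he_def]
      simp only [Complex.norm_exp, Complex.neg_re]
      rw [hw₀eq]
      exact Real.exp_le_exp.2 (by linarith [hHre w hw])
    have heqconst := Complex.eqOn_of_isPreconnected_of_isMaxOn_norm
      preconnected_rhp isOpen_rhp hed hw₀ hmax
    -- identify the constant as 1
    have het : Tendsto (fun t : ℝ => e (t:ℂ)) atTop (nhds 1) := by
      have hcont : Continuous (fun x : ℂ => Complex.exp (-x)) :=
        Complex.continuous_exp.comp continuous_neg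
      have := (hcont.tendsto 0).comp hlimH0
      simpa [he_def, Function.comp_def] using this
    have hconstev : ∀ᶠ t : ℝ in atTop, e (t:ℂ) = e w₀ := by
      filter_upwards [eventually_ge_atTop (1:ℝ)] with t ht
      exact heqconst (ofReal_mem_rhp (by linarith))
    have hcw : Tendsto (fun _ : ℝ => e w₀) atTop (nhds 1) :=
      Filter.Tendsto.congr' hconstev het
    have hew₀ : e w₀ = 1 := tendsto_nhds_unique tendsto_const_nhds hcw
    have hexp1 : ∀ w ∈ rhp, Complex.exp (-H w) = 1 := by
      intro w hw
      have := heqconst hw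
      rw [Function.const_apply, hew₀] at this
      exact this
    have hpi : (6:ℝ) < 2 * Real.pi := by
      have := Real.pi_gt_three
      linarith
    -- connectedness argument
    set V : Set ℂ := rhp ∩ H ⁻¹' (ball (0:ℂ) 6) with hV_def
    set W : Set ℂ := rhp ∩ H ⁻¹' {u : ℂ | 5 < ‖u‖} with hW_def
    have hHc : ContinuousOn H rhp := hHd.continuousOn
    have hVopen : IsOpen V := hHc.isOpen_inter_preimage isOpen_rhp isOpen_ball
    have hWopen : IsOpen W :=
      hHc.isOpen_inter_preimage isOpen_rhp (isOpen_lt continuous_const continuous_norm)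
    have habsH : ∀ w ∈ rhp, H w = 0 ∨ 2 * Real.pi ≤ ‖(H w)‖ := by
      intro w hw
      obtain ⟨n, hn⟩ := Complex.exp_eq_one_iff.1 (hexp1 w hw)
      have hHw : H w = -((n:ℂ) * (2 * (Real.pi:ℂ) * Complex.I)) := by
        rw [← hn]; ring
      rcases eq_or_ne n 0 with h0 | h0
      · left; rw [hHw, h0]; simp
      · right
        rw [hHw, norm_neg, abs_int_two_pi]
        have : (1:ℝ) ≤ |(n:ℝ)| := by
          rw [← Int.cast_abs]
          exact_mod_cast Int.one_le_abs h0
        nlinarith [Real.pi_pos]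
    have hdisj : Disjoint V W := by
      rw [Set.disjoint_left]
      rintro w ⟨hw, hw6⟩ ⟨-, hw5⟩
      rw [Set.mem_preimage, mem_ball_zero_iff] at hw6
      rw [Set.mem_preimage, Set.mem_setOf_eq] at hw5
      rcases habsH w hw with h | h
      · rw [h, norm_zero] at hw5; linarith
      · linarith
    have hcover : rhp ⊆ V ∪ W := by
      intro w hw
      rcases habsH w hw with h | h
      · left
        exact ⟨hw, by rw [Set.mem_preimage, mem_ball_zero_iff, h, norm_zero]; norm_num⟩
      · right
        exact ⟨hw, by rw [Set.mem_preimage, Set.mem_setOf_eq]; linarith⟩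
    have hVne : (rhp ∩ V).Nonempty := by
      have hevsm : ∀ᶠ t : ℝ in atTop, ‖(H (t:ℂ))‖ < 6 := by
        have htH0 : Tendsto (fun t : ℝ => ‖(H (t:ℂ))‖) atTop (nhds 0) := by
          have := (continuous_norm.tendsto 0).comp hlimH0
          simpa [Function.comp_def] using this
        exact htH0.eventually_lt_const (by norm_num)
      obtain ⟨t, ht1, hsm⟩ := ((eventually_ge_atTop (1:ℝ)).and hevsm).exists
      have htr : ((t:ℂ)) ∈ rhp := ofReal_mem_rhp (by linarith)
      exact ⟨(t:ℂ), htr, htr,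
        by rw [Set.mem_preimage, mem_ball_zero_iff]; exact hsm⟩
    have hsubV : rhp ⊆ V :=
      preconnected_rhp.subset_left_of_subset_union hVopen hWopen hdisj hcover hVne
    intro w hw
    obtain ⟨-, hw6⟩ := hsubV hw
    rw [Set.mem_preimage, mem_ball_zero_iff] at hw6
    rcases habsH w hw with h | h
    · exact h
    · linarith

lemma eps_tendsto {F : ℂ → ℂ} (hC : CA3At1 F 1 1 0 0) :
    Tendsto (bkEps F) atTop (nhds 0) := by
  have hzt : Tendsto (fun t : ℝ => mD (t:ℂ)) atTop (nhdsWithin 1 (stolzAngle 1 2)) :=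
    tendsto_nhdsWithin_iff.2 ⟨mD_tendsto_one, mD_mem_stolz⟩
  have htmp := (hC 2 one_lt_two).comp hzt
  apply Tendsto.congr ?_ htmp
  intro t
  show (F (mD (t:ℂ)) - (1 + 1 * (mD (t:ℂ) - 1) + 0 / 2 * (mD (t:ℂ) - 1) ^ 2
      + 0 / 6 * (mD (t:ℂ) - 1) ^ 3)) / (mD (t:ℂ) - 1) ^ 3 = bkEps F t
  rw [bkEps]
  congr 1
  ring


end BKAux

open BKAux

/-- Burns–Krantz rigidity theorem: a holomorphic self-map of the disk of class `C_A^3(1)`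
with `F(1) = 1`, `F'(1) = 1`, `F''(1) = 0`, `F'''(1) = 0` is the identity. -/
theorem stmt0 (F : ℂ → ℂ) (hF : HolSelfMap F)
    (hC : CA3At1 F 1 1 0 0) :
    ∀ z ∈ unitDisk, F z = z := by
  intro z hz
  have hεlim : Tendsto (bkEps F) atTop (nhds 0) := eps_tendsto hC
  obtain ⟨hGd, hGm⟩ := bkG_diff hF
  have hid := H_zero hGd hGm (asympt hF hεlim) (asympt0 hF hεlim)
  have hw : mC z ∈ rhp := mC_mem hz
  have hG : bkG F (mC z) = mC z := hid (mC z) hw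
  rw [bkG, mD_mC hz] at hG
  exact mC_inj (hF.2 hz) hz hG
end
end

section
/- Let F ∈ Hol(Δ,Δ) ∩ C_A^3(1) with F(1) = 1 and 0 < α = F'(1) ≤ 1. The following are equivalent: (i) F(D(1,k)) ⊆ D(1, kα/(1+k(1−α))) for every k > 0, and F''(1) = F'''(1) = 0; (ii) F is the affine mapping F(z) = αz + 1 − α. -/
open Complex Filter Set Metric ComplexConjugate

noncomputable section

/-! ### Auxiliary lemmas for `stmt5` -/

lemma unitDisk_eq' : unitDisk = Metric.ball (0:ℂ) 1 := by
  ext z; simp [unitDisk, Metric.mem_ball, Complex.dist_eq]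

lemma ne_zero_of_re_pos' {z : ℂ} (h : 0 < z.re) : z ≠ 0 := fun h0 => by simp [h0] at h

lemma one_sub_ne' {z : ℂ} (hz : ‖z‖ < 1) : (1:ℂ) - z ≠ 0 := by
  intro h
  have : z = 1 := by linear_combination -h
  simp [this] at hz

lemma ns_pos' {z : ℂ} (hz : ‖z‖ < 1) : 0 < 1 - Complex.normSq z := by
  have := Complex.sq_norm z
  nlinarith [norm_nonneg z]

lemma ns_one_sub_pos' {z : ℂ} (hz : ‖z‖ < 1) : 0 < Complex.normSq (1 - z) :=
  Complex.normSq_pos.2 (one_sub_ne' hz)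

lemma abs_lt_one_of_normSq_lt_one' {z : ℂ} (h : Complex.normSq z < 1) : ‖z‖ < 1 := by
  have := Complex.sq_norm z
  nlinarith [norm_nonneg z]

lemma aff_ns' (α : ℝ) (u : ℂ) :
    1 - Complex.normSq ((α:ℂ)*u + 1 - α) =
      α*(1 - Complex.normSq u) + α*(1-α)*Complex.normSq (1-u) := by
  simp [Complex.normSq_apply]
  ring

lemma aff_ns1' (α : ℝ) (u : ℂ) :
    Complex.normSq (1 - ((α:ℂ)*u + 1 - α)) = α^2 * Complex.normSq (1-u) := by
  simp [Complex.normSq_apply]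
  ring

lemma pos_id' (α : ℝ) (w : ℂ) :
    Complex.normSq (w - (1 - (α:ℂ))) - α^2
      = (1-α)*Complex.normSq (1-w) - α*(1-Complex.normSq w) := by
  simp [Complex.normSq_apply]
  ring

lemma re_cayley' (w : ℂ) :
    (((1+w)/(1-w))).re = (1 - Complex.normSq w)/Complex.normSq (1-w) := by
  rw [Complex.div_re, ← add_div]
  congr 1
  simp [Complex.normSq_apply]
  ring

lemma mob_lt' {w v : ℂ} {ε : ℝ} (hw : 0 ≤ w.re) (hv : 0 ≤ v.re) (hε : 0 < ε) :
    ‖w - v‖ < ‖w + conj v + 2*ε‖ := by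
  have h2 : Complex.normSq (w - v) < Complex.normSq (w + conj v + 2*ε) := by
    simp [Complex.normSq_apply]
    nlinarith [sq_nonneg (w.im - v.im)]
  rw [Complex.norm_def, Complex.norm_def]
  exact Real.sqrt_lt_sqrt (Complex.normSq_nonneg _) h2

lemma reExtract' {w v : ℂ} {r : ℝ}
    (h : ‖w - v‖ ≤ r * ‖w + conj v‖)
    (hw : 0 ≤ w.re) (hv : 0 ≤ v.re) (hr0 : 0 ≤ r) (hr1 : r ≤ 1) :
    v.re * (1 - r) ≤ w.re * (1 + r) := by
  have h2 : (‖w - v‖)^2 ≤ (r * ‖w + conj v‖)^2 :=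
    pow_le_pow_left₀ (norm_nonneg _) h 2
  rw [mul_pow, Complex.sq_norm, Complex.sq_norm] at h2
  simp [Complex.normSq_apply] at h2
  nlinarith [mul_nonneg hr0 (add_nonneg hv hw),
    mul_nonneg (mul_nonneg (sub_nonneg.2 hr1) (by linarith : (0:ℝ) ≤ 1+r))
      (sq_nonneg (w.im - v.im))]

lemma radial_neBot' : (nhdsWithin (1:ℝ) (Set.Ioo (0:ℝ) 1)).NeBot :=
  right_nhdsWithin_Ioo_neBot one_pos

lemma radial_tendsto' : Filter.Tendsto (fun r : ℝ => (r:ℂ))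
    (nhdsWithin 1 (Set.Ioo (0:ℝ) 1)) (nhdsWithin 1 (stolzAngle 1 2)) := by
  rw [tendsto_nhdsWithin_iff]
  constructor
  · have : Filter.Tendsto (fun r : ℝ => (r:ℂ)) (nhds 1) (nhds ((1:ℝ):ℂ)) :=
      Complex.continuous_ofReal.continuousAt
    simpa using this.mono_left nhdsWithin_le_nhds
  · filter_upwards [self_mem_nhdsWithin] with r hr
    obtain ⟨hr0, hr1⟩ := hr
    have habs : ‖(r:ℂ)‖ = r := by
      rw [Complex.norm_real, Real.norm_eq_abs, abs_of_pos hr0]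
    refine ⟨by simpa [unitDisk, habs, abs_of_pos hr0] using hr1, ?_⟩
    have h2 : ((r:ℂ) - 1) = ((r - 1 : ℝ) : ℂ) := by push_cast; ring
    rw [h2, Complex.norm_real, Real.norm_eq_abs, abs_of_neg (by linarith), habs]
    linarith

lemma mem_unitDisk_ofReal {r : ℝ} (hr : r ∈ Set.Ioo (0:ℝ) 1) : ((r:ℂ)) ∈ unitDisk := by
  show ‖(r:ℂ)‖ < 1
  rw [Complex.norm_real, Real.norm_eq_abs, abs_of_pos hr.1]
  exact hr.2

lemma ofReal_sub_one_ne {r : ℝ} (hr : r ∈ Set.Ioo (0:ℝ) 1) : ((r:ℂ)) - 1 ≠ 0 := by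
  have h2 : ((r:ℂ) - 1) = ((r - 1 : ℝ) : ℂ) := by push_cast; ring
  rw [h2]
  exact_mod_cast (by linarith [hr.2] : r - 1 ≠ 0)

lemma abs_ofReal_sub_one {r : ℝ} (hr : r ∈ Set.Ioo (0:ℝ) 1) :
    ‖(r:ℂ) - 1‖ = 1 - r := by
  have h2 : ((r:ℂ) - 1) = ((r - 1 : ℝ) : ℂ) := by push_cast; ring
  rw [h2, Complex.norm_real, Real.norm_eq_abs, abs_of_neg (by linarith [hr.2])]
  ring

lemma abs_one_sub_ofReal {r : ℝ} (hr : r ∈ Set.Ioo (0:ℝ) 1) :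
    ‖1 - (r:ℂ)‖ = 1 - r := by
  rw [← abs_ofReal_sub_one hr]
  exact norm_sub_rev 1 _


set_option maxHeartbeats 1000000 in
theorem stmt5 (F : ℂ → ℂ) (hF : HolSelfMap F)
    (α : ℝ) (hα : 0 < α) (hα1 : α ≤ 1) (b c : ℂ)
    (hC : CA3At1 F 1 (α : ℂ) b c) :
    ((∀ k : ℝ, 0 < k →
        Set.MapsTo F (horocycle k) (horocycle (k * α / (1 + k * (1 - α))))) ∧
      b = 0 ∧ c = 0) ↔
    (∀ z ∈ unitDisk, F z = (α : ℂ) * z + 1 - (α : ℂ)) := by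
  haveI : (nhdsWithin (1:ℝ) (Set.Ioo (0:ℝ) 1)).NeBot := radial_neBot'
  have hα0 : (α:ℂ) ≠ 0 := by exact_mod_cast hα.ne'
  constructor
  · rintro ⟨hMaps, rfl, rfl⟩
    set G : ℂ → ℂ := fun w => (F w - (1 - (α:ℂ)))/α with hGdef
    have hFG : ∀ w, (α:ℂ) * G w + 1 - α = F w := by
      intro w; simp only [hGdef]; field_simp; ring
    -- G maps the disk into itself
    have hGD : ∀ w ∈ unitDisk, G w ∈ unitDisk := by
      intro w hw
      have hsw := ns_pos' hw
      set k := Complex.normSq (1 - w) / (1 - Complex.normSq w) + 1 with hkdef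
      have hlw0 : 0 ≤ Complex.normSq (1 - w) / (1 - Complex.normSq w) :=
        div_nonneg (Complex.normSq_nonneg _) hsw.le
      have hkpos : 0 < k := by simp only [hkdef]; linarith
      have hwmem : w ∈ horocycle k := by
        refine ⟨hw, ?_⟩
        rw [Complex.sq_norm, Complex.sq_norm]
        simp only [hkdef]; linarith
      obtain ⟨hFD, hFlt⟩ := hMaps k hkpos hwmem
      rw [Complex.sq_norm, Complex.sq_norm] at hFlt
      have hsF : 0 < 1 - Complex.normSq (F w) := ns_pos' hFD
      have htF : 0 ≤ Complex.normSq (1 - F w) := Complex.normSq_nonneg _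
      have hden : 0 < 1 + k * (1 - α) := by nlinarith
      have hlt : Complex.normSq (1 - F w)
          < k * α / (1 + k * (1 - α)) * (1 - Complex.normSq (F w)) :=
        (div_lt_iff₀ hsF).1 hFlt
      have hk' : (1 - α) * (k * α / (1 + k * (1 - α))) ≤ α := by
        rw [show (1 - α) * (k * α / (1 + k * (1 - α)))
            = ((1 - α) * (k * α)) / (1 + k * (1 - α)) by ring, div_le_iff₀ hden]
        nlinarith
      have hkey0 : (1-α) * Complex.normSq (1 - F w) < α * (1 - Complex.normSq (F w)) := by
        rcases eq_or_lt_of_le hα1 with h1 | h1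
        · rw [h1]; norm_num; linarith
        · nlinarith [mul_lt_mul_of_pos_left hlt (by linarith : (0:ℝ) < 1 - α),
            mul_le_mul_of_nonneg_right hk' hsF.le]
      have hns : Complex.normSq (F w - (1 - (α:ℂ))) < α^2 := by
        have := pos_id' α (F w); linarith
      show ‖G w‖ < 1
      apply abs_lt_one_of_normSq_lt_one'
      simp only [hGdef]
      rw [Complex.normSq_div, Complex.normSq_ofReal]
      rw [div_lt_one (by nlinarith)]
      nlinarith
    -- Julia-type inequality for G, from the horocycle hypothesis
    have hlam : ∀ w ∈ unitDisk,
        Complex.normSq (1 - G w) * (1 - Complex.normSq w) ≤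
        Complex.normSq (1 - w) * (1 - Complex.normSq (G w)) := by
      intro w hw
      by_contra hcon
      push_neg at hcon
      have hsw := ns_pos' hw
      have hGw := hGD w hw
      have hsG := ns_pos' hGw
      have htw := ns_one_sub_pos' hw
      have htG := ns_one_sub_pos' hGw
      set lz := Complex.normSq (1 - w) / (1 - Complex.normSq w) with hlz
      set lG := Complex.normSq (1 - G w) / (1 - Complex.normSq (G w)) with hlG
      have hll : lz < lG := by
        rw [hlz, hlG, div_lt_div_iff₀ hsw hsG]
        nlinarith
      have hlz0 : 0 ≤ lz := div_nonneg (Complex.normSq_nonneg _) hsw.le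
      set k := (lz + lG)/2 with hk
      have hk0 : 0 < k := by simp only [hk]; linarith
      have hwk : w ∈ horocycle k := by
        refine ⟨hw, ?_⟩
        rw [Complex.sq_norm, Complex.sq_norm, ← hlz]
        simp only [hk]; linarith
      obtain ⟨hFD, hFlt⟩ := hMaps k hk0 hwk
      rw [Complex.sq_norm, Complex.sq_norm] at hFlt
      rw [← hFG w, aff_ns1', aff_ns'] at hFlt
      have hden1 : 0 < α*(1 - Complex.normSq (G w)) + α*(1-α)*Complex.normSq (1-(G w)) := by
        nlinarith [mul_pos hα hsG,
          mul_nonneg (mul_nonneg hα.le (by linarith : (0:ℝ) ≤ 1-α)) htG.le]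
      have hden2 : 0 < 1 + k*(1-α) := by nlinarith
      rw [div_lt_div_iff₀ hden1 hden2] at hFlt
      have h9 : Complex.normSq (1 - G w) < k * (1 - Complex.normSq (G w)) := by
        nlinarith [mul_pos hα hα]
      have h10 : lG < k := by rw [hlG, div_lt_iff₀ hsG]; linarith
      simp only [hk] at h10
      linarith
    -- the function q
    have h0D : (0:ℂ) ∈ unitDisk := by
      show ‖(0:ℂ)‖ < 1; simp
    set q : ℂ → ℂ := fun w => (1 + G w)/(1 - G w) - (1 + w)/(1 - w) with hqdef
    have hGdiff : DifferentiableOn ℂ G unitDisk := (hF.1.sub_const _).div_const _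
    have hqdiff : DifferentiableOn ℂ q unitDisk := by
      apply DifferentiableOn.sub
      · exact ((differentiableOn_const _).add hGdiff).div
          ((differentiableOn_const _).sub hGdiff)
          (fun w hw => one_sub_ne' (hGD w hw))
      · exact ((differentiableOn_const _).add differentiableOn_id).div
          ((differentiableOn_const _).sub differentiableOn_id)
          (fun w hw => one_sub_ne' hw)
    have hqre : ∀ w ∈ unitDisk, 0 ≤ (q w).re := by
      intro w hw
      have hGw := hGD w hw
      simp only [hqdef, Complex.sub_re]
      rw [re_cayley', re_cayley', sub_nonneg,
        div_le_div_iff₀ (ns_one_sub_pos' hw) (ns_one_sub_pos' hGw)]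
      nlinarith [hlam w hw]
    -- Schwarz lemma consequence
    have hkey : ∀ w ∈ unitDisk,
        ‖q w - q 0‖ ≤ ‖w‖ * ‖q w + conj (q 0)‖ := by
      intro w hw
      have habsw : ‖w‖ < 1 := hw
      have hstep : ∀ ε : ℝ, 0 < ε →
          ‖q w - q 0‖ ≤ ‖w‖ * ‖q w + conj (q 0)‖ + 2*ε := by
        intro ε hε
        set g : ℂ → ℂ := fun u => (q u - q 0)/(q u + conj (q 0) + 2*ε) with hgdef
        have hdenre : ∀ u ∈ unitDisk, 0 < (q u + conj (q 0) + 2*(ε:ℂ)).re := by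
          intro u hu
          have h1 : (q u + conj (q 0) + 2*(ε:ℂ)).re = (q u).re + (q 0).re + 2*ε := by
            simp [Complex.add_re, Complex.conj_re]
          rw [h1]
          have := hqre u hu; have := hqre 0 h0D
          linarith
        have hdenne : ∀ u ∈ unitDisk, q u + conj (q 0) + 2*(ε:ℂ) ≠ 0 :=
          fun u hu => ne_zero_of_re_pos' (hdenre u hu)
        have hgdiff : DifferentiableOn ℂ g (Metric.ball 0 1) := by
          rw [← unitDisk_eq']
          exact (hqdiff.sub_const _).div ((hqdiff.add_const _).add_const _) hdenne
        have hgmaps : Set.MapsTo g (Metric.ball 0 1) (Metric.ball 0 1) := by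
          intro u hu
          rw [← unitDisk_eq'] at hu
          rw [Metric.mem_ball, dist_zero_right, hgdef]
          simp only
          rw [norm_div, div_lt_one (norm_pos_iff.2 (hdenne u hu))]
          exact mob_lt' (hqre u hu) (hqre 0 h0D) hε
        have hg0 : g 0 = 0 := by simp [hgdef]
        have hsch := Complex.norm_le_norm_of_mapsTo_ball hgdiff (hgmaps.mono_right Metric.ball_subset_closedBall) hg0
          (show ‖w‖ < 1 from habsw)
        rw [hgdef] at hsch
        simp only at hsch
        rw [norm_div, div_le_iff₀ (norm_pos_iff.2 (hdenne w hw))] at hsch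
        have htri : ‖q w + conj (q 0) + 2*(ε:ℂ)‖
            ≤ ‖q w + conj (q 0)‖ + 2*ε := by
          calc ‖q w + conj (q 0) + 2*(ε:ℂ)‖
              ≤ ‖q w + conj (q 0)‖ + ‖2*(ε:ℂ)‖ :=
                norm_add_le _ _
            _ = ‖q w + conj (q 0)‖ + 2*ε := by
                rw [norm_mul, Complex.norm_two, Complex.norm_real, Real.norm_eq_abs, abs_of_pos hε]
        calc ‖q w - q 0‖
            ≤ ‖w‖ * ‖q w + conj (q 0) + 2*(ε:ℂ)‖ := hsch
          _ ≤ ‖w‖ * (‖q w + conj (q 0)‖ + 2*ε) :=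
              mul_le_mul_of_nonneg_left htri (norm_nonneg w)
          _ ≤ ‖w‖ * ‖q w + conj (q 0)‖ + 2*ε := by
              nlinarith [norm_nonneg w]
      by_contra hcon
      push_neg at hcon
      have := hstep ((‖q w - q 0‖
        - ‖w‖ * ‖q w + conj (q 0)‖)/4) (by linarith)
      linarith
    -- radial estimates
    have hrad := (hC 2 one_lt_two).comp radial_tendsto'
    set H : ℝ → ℂ := fun r => (F (r:ℂ) - (1 + (α:ℂ) * ((r:ℂ) - 1) + 0/2*((r:ℂ)-1)^2
      + 0/6*((r:ℂ)-1)^3)) / ((r:ℂ) - 1)^3 with hHdef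
    have habsH : Filter.Tendsto (fun r => ‖H r‖)
        (nhdsWithin (1:ℝ) (Set.Ioo (0:ℝ) 1)) (nhds 0) := by
      have h1 : Filter.Tendsto (fun z : ℂ => ‖z‖) (nhds 0) (nhds 0) := by
        simpa using continuous_norm.tendsto (0:ℂ)
      exact h1.comp hrad
    have hEv : ∀ᶠ r : ℝ in nhdsWithin (1:ℝ) (Set.Ioo (0:ℝ) 1),
        ‖q (r:ℂ)‖ ≤ 4 * ‖H r‖ * (1 - r) / α := by
      have h1 : ∀ᶠ r : ℝ in nhdsWithin (1:ℝ) (Set.Ioo (0:ℝ) 1),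
          ‖H r‖ < α/2 := habsH.eventually_lt_const (by linarith)
      filter_upwards [h1, self_mem_nhdsWithin] with r hH2 hr
      obtain ⟨hr0, hr1⟩ := hr
      have hrD : ((r:ℂ)) ∈ unitDisk := mem_unitDisk_ofReal ⟨hr0, hr1⟩
      have hGr := hGD _ hrD
      have hne1 : (r:ℂ) - 1 ≠ 0 := ofReal_sub_one_ne ⟨hr0, hr1⟩
      have habs1 : ‖(r:ℂ) - 1‖ = 1 - r := abs_ofReal_sub_one ⟨hr0, hr1⟩
      have habs1' : ‖1 - (r:ℂ)‖ = 1 - r := abs_one_sub_ofReal ⟨hr0, hr1⟩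
      have hδ : G (r:ℂ) - (r:ℂ) = H r * ((r:ℂ) - 1)^3 / α := by
        simp only [hHdef, hGdef]
        field_simp
        ring
      have habsδ : ‖G (r:ℂ) - (r:ℂ)‖ = ‖H r‖ * (1-r)^3 / α := by
        rw [hδ, norm_div, norm_mul, norm_pow, habs1, Complex.norm_real, Real.norm_eq_abs, abs_of_pos hα]
      have hδle : ‖G (r:ℂ) - (r:ℂ)‖ ≤ (1-r)/2 := by
        rw [habsδ, div_le_iff₀ hα]
        have hp : (1-r)^3 ≤ (1-r) := by
          nlinarith [mul_nonneg (mul_nonneg (by linarith : (0:ℝ) ≤ 1-r)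
            (by linarith : (0:ℝ) ≤ r)) (by linarith : (0:ℝ) ≤ 2-r)]
        nlinarith [mul_le_mul_of_nonneg_right hH2.le
          (pow_nonneg (by linarith : (0:ℝ) ≤ 1-r) 3),
          mul_le_mul_of_nonneg_left hp (by linarith : (0:ℝ) ≤ α/2),
          norm_nonneg (H r)]
      have hd : (1 - r)/2 ≤ ‖1 - G (r:ℂ)‖ := by
        have htri : ‖1 - (r:ℂ)‖
            ≤ ‖1 - G (r:ℂ)‖ + ‖G (r:ℂ) - (r:ℂ)‖ := by
          rw [show (1:ℂ) - (r:ℂ) = (1 - G (r:ℂ)) + (G (r:ℂ) - (r:ℂ)) from by ring]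
          exact norm_add_le _ _
        rw [habs1'] at htri
        linarith
      have hq_id : q (r:ℂ) = 2*(G (r:ℂ) - (r:ℂ))/((1 - G (r:ℂ))*(1 - (r:ℂ))) := by
        simp only [hqdef]
        have hne2 : (1:ℂ) - G (r:ℂ) ≠ 0 := one_sub_ne' hGr
        have hne3 : (1:ℂ) - (r:ℂ) ≠ 0 := one_sub_ne' hrD
        field_simp
        ring
      have habsq : ‖q (r:ℂ)‖ = 2 * ‖G (r:ℂ) - (r:ℂ)‖
          / (‖1 - G (r:ℂ)‖ * (1 - r)) := by
        rw [hq_id, norm_div, norm_mul, norm_mul, habs1', Complex.norm_two]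
      have hdpos : 0 < ‖1 - G (r:ℂ)‖ * (1 - r) := by nlinarith
      rw [habsq, div_le_div_iff₀ hdpos hα]
      have habsδ' : ‖G (r:ℂ) - (r:ℂ)‖ * α = ‖H r‖ * (1-r)^3 := by
        rw [habsδ]; field_simp
      have h2d : 0 ≤ 2 * ‖1 - G (r:ℂ)‖ - (1-r) := by linarith
      nlinarith [mul_nonneg (mul_nonneg (norm_nonneg (H r))
        (by positivity : (0:ℝ) ≤ (1-r)^2)) h2d]
    -- Step A : Re (q 0) = 0
    have hge : 0 ≤ (q 0).re := hqre 0 h0D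
    have hA : (q 0).re = 0 := by
      have hEvA : ∀ᶠ r : ℝ in nhdsWithin (1:ℝ) (Set.Ioo (0:ℝ) 1),
          (q 0).re ≤ 8 * ‖H r‖ / α := by
        filter_upwards [hEv, self_mem_nhdsWithin] with r hqb hr
        obtain ⟨hr0, hr1⟩ := hr
        have hrD : ((r:ℂ)) ∈ unitDisk := mem_unitDisk_ofReal ⟨hr0, hr1⟩
        have hk2 := hkey _ hrD
        have hrabs : ‖(r:ℂ)‖ = r := by
          rw [Complex.norm_real, Real.norm_eq_abs, abs_of_pos hr0]
        rw [hrabs] at hk2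
        have hre := reExtract' hk2 (hqre _ hrD) hge hr0.le hr1.le
        have h6 : (q (r:ℂ)).re ≤ ‖q (r:ℂ)‖ := Complex.re_le_norm _
        have hx0 : 0 ≤ (q (r:ℂ)).re := hqre _ hrD
        have h8 : (q (r:ℂ)).re * (1+r) ≤ 2 * ‖q (r:ℂ)‖ := by
          nlinarith [mul_nonneg hx0 (by linarith : (0:ℝ) ≤ 1 - r)]
        have h7 : (q 0).re * (1-r) ≤ (8 * ‖H r‖ / α) * (1-r) := by
          calc (q 0).re * (1-r) ≤ 2 * ‖q (r:ℂ)‖ := le_trans hre h8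
            _ ≤ 2 * (4 * ‖H r‖ * (1-r) / α) := by linarith
            _ = (8 * ‖H r‖ / α) * (1-r) := by ring
        exact le_of_mul_le_mul_right h7 (by linarith)
      have hlim : Filter.Tendsto (fun r => 8 * ‖H r‖ / α)
          (nhdsWithin (1:ℝ) (Set.Ioo (0:ℝ) 1)) (nhds 0) := by
        have h1 := (habsH.const_mul (8:ℝ)).div_const α
        simpa using h1
      have := ge_of_tendsto hlim hEvA
      linarith
    have hconj : conj (q 0) = - q 0 := by
      apply Complex.ext
      · simp [hA]
      · simp
    have hfix : ∀ w ∈ unitDisk, q w = q 0 := by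
      intro w hw
      have hk2 := hkey w hw
      rw [hconj] at hk2
      rw [show q w + -q 0 = q w - q 0 from by ring] at hk2
      have habsw : ‖w‖ < 1 := hw
      have h3 : ‖q w - q 0‖ ≤ 0 := by
        nlinarith [norm_nonneg (q w - q 0)]
      have h4 : q w - q 0 = 0 := by
        have := norm_nonneg (q w - q 0)
        exact norm_eq_zero.1 (le_antisymm h3 this)
      linear_combination h4
    have hq00 : q 0 = 0 := by
      have hEv0 : ∀ᶠ r : ℝ in nhdsWithin (1:ℝ) (Set.Ioo (0:ℝ) 1),
          ‖q 0‖ ≤ 4 * ‖H r‖ * (1-r) / α := by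
        filter_upwards [hEv, self_mem_nhdsWithin] with r hqb hr
        rw [hfix _ (mem_unitDisk_ofReal hr)] at hqb
        exact hqb
      have hsub1 : Filter.Tendsto (fun r : ℝ => 1 - r)
          (nhdsWithin (1:ℝ) (Set.Ioo (0:ℝ) 1)) (nhds 0) := by
        have h1 : Filter.Tendsto (fun r : ℝ => 1 - r) (nhds 1) (nhds (1-1)) :=
          tendsto_const_nhds.sub tendsto_id
        simpa using h1.mono_left nhdsWithin_le_nhds
      have hlim0 : Filter.Tendsto (fun r => 4 * ‖H r‖ * (1-r) / α)
          (nhdsWithin (1:ℝ) (Set.Ioo (0:ℝ) 1)) (nhds 0) := by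
        have h1 := ((habsH.const_mul (4:ℝ)).mul hsub1).div_const α
        simpa using h1
      have h2 := ge_of_tendsto hlim0 hEv0
      exact norm_eq_zero.1 (le_antisymm h2 (norm_nonneg _))
    intro z hz
    have hqz : q z = 0 := (hfix z hz).trans hq00
    simp only [hqdef] at hqz
    have hne2 : (1:ℂ) - G z ≠ 0 := one_sub_ne' (hGD z hz)
    have hne3 : (1:ℂ) - z ≠ 0 := one_sub_ne' hz
    rw [div_sub_div _ _ hne2 hne3, div_eq_zero_iff] at hqz
    have h5 : (1 + G z) * (1 - z) - (1 - G z) * (1 + z) = 0 := by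
      rcases hqz with h | h
      · exact h
      · exact absurd h (mul_ne_zero hne2 hne3)
    have hGz : G z = z := by linear_combination h5/2
    rw [← hFG z, hGz]

  · intro hAff
    have hmapsto : ∀ k : ℝ, 0 < k →
        Set.MapsTo F (horocycle k) (horocycle (k * α / (1 + k * (1 - α)))) := by
      intro k hk z hz
      obtain ⟨hzD, hzk⟩ := hz
      rw [Complex.sq_norm, Complex.sq_norm] at hzk
      have hs := ns_pos' hzD
      have ht := ns_one_sub_pos' hzD
      have hzk' : Complex.normSq (1-z) < k * (1 - Complex.normSq z) := (div_lt_iff₀ hs).1 hzk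
      have hFz : F z = (α:ℂ)*z + 1 - α := hAff z hzD
      have hnsF := aff_ns' α z
      have hnsF1 := aff_ns1' α z
      have hFpos : 0 < 1 - Complex.normSq ((α:ℂ)*z + 1 - α) := by
        rw [hnsF]
        nlinarith [mul_pos hα hs,
          mul_nonneg (mul_nonneg hα.le (by linarith : (0:ℝ) ≤ 1-α)) ht.le]
      have hFD : F z ∈ unitDisk := by
        show ‖F z‖ < 1
        rw [hFz]
        exact abs_lt_one_of_normSq_lt_one' (by linarith)
      refine ⟨hFD, ?_⟩
      rw [Complex.sq_norm, Complex.sq_norm, hFz, hnsF, hnsF1]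
      have hden2 : 0 < 1 + k*(1-α) := by nlinarith
      rw [div_lt_div_iff₀ (by nlinarith) hden2]
      nlinarith [mul_pos (mul_pos hα hα) (by linarith :
        (0:ℝ) < k * (1 - Complex.normSq z) - Complex.normSq (1-z))]
    have hrad := (hC 2 one_lt_two).comp radial_tendsto'
    have hEq : ∀ᶠ r : ℝ in nhdsWithin (1:ℝ) (Set.Ioo (0:ℝ) 1),
        ((fun z => (F z - (1 + (α:ℂ) * (z - 1) + b/2*(z-1)^2 + c/6*(z-1)^3)) / (z - 1)^3)
          ∘ fun r : ℝ => (r:ℂ)) r = -(b/2)/((r:ℂ)-1) - c/6 := by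
      filter_upwards [self_mem_nhdsWithin] with r hr
      have hrD : ((r:ℂ)) ∈ unitDisk := mem_unitDisk_ofReal hr
      have hne : (r:ℂ) - 1 ≠ 0 := ofReal_sub_one_ne hr
      simp only [Function.comp_apply]
      rw [hAff _ hrD]
      field_simp
      ring
    have hrad' : Filter.Tendsto (fun r : ℝ => -(b/2)/((r:ℂ)-1) - c/6)
        (nhdsWithin (1:ℝ) (Set.Ioo (0:ℝ) 1)) (nhds 0) := Filter.Tendsto.congr' hEq hrad
    have hsub : Filter.Tendsto (fun r : ℝ => (r:ℂ) - 1)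
        (nhdsWithin (1:ℝ) (Set.Ioo (0:ℝ) 1)) (nhds 0) := by
      have h1 : Filter.Tendsto (fun r : ℝ => (r:ℂ)) (nhds 1) (nhds ((1:ℝ):ℂ)) :=
        Complex.continuous_ofReal.continuousAt
      simpa using (h1.mono_left nhdsWithin_le_nhds).sub_const 1
    have hmul := hrad'.mul hsub
    have hEq2 : ∀ᶠ r : ℝ in nhdsWithin (1:ℝ) (Set.Ioo (0:ℝ) 1),
        (-(b/2)/((r:ℂ)-1) - c/6) * ((r:ℂ)-1) = -(b/2) - c/6*((r:ℂ)-1) := by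
      filter_upwards [self_mem_nhdsWithin] with r hr
      have hne : (r:ℂ) - 1 ≠ 0 := ofReal_sub_one_ne hr
      field_simp
    have hmul' : Filter.Tendsto (fun r : ℝ => -(b/2) - c/6*((r:ℂ)-1))
        (nhdsWithin (1:ℝ) (Set.Ioo (0:ℝ) 1)) (nhds 0) := by
      have := Filter.Tendsto.congr' hEq2 hmul
      simpa using this
    have hconst : Filter.Tendsto (fun r : ℝ => -(b/2) - c/6*((r:ℂ)-1))
        (nhdsWithin (1:ℝ) (Set.Ioo (0:ℝ) 1)) (nhds (-(b/2) - c/6*0)) :=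
      tendsto_const_nhds.sub (tendsto_const_nhds.mul hsub)
    have hb : b = 0 := by
      have h1 := tendsto_nhds_unique hmul' hconst
      linear_combination 2*h1
    subst hb
    have hc : c = 0 := by
      have hrad'' : Filter.Tendsto (fun _ : ℝ => -(c/6) : ℝ → ℂ)
          (nhdsWithin (1:ℝ) (Set.Ioo (0:ℝ) 1)) (nhds 0) := by
        apply Filter.Tendsto.congr _ hrad'
        intro r
        norm_num
      have h1 := tendsto_nhds_unique (tendsto_const_nhds :
        Filter.Tendsto (fun _ : ℝ => -(c/6) : ℝ → ℂ) _ (nhds (-(c/6)))) hrad''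
      linear_combination -6*h1
    exact ⟨hmapsto, rfl, hc⟩
end
end
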